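/- Product formula for Riordan matrices: let d, f be formal power series over ℝ, and let h, g be formal power series over ℝ with zero constant coefficient. Then for all natural numbers i, j: Σ_{k=0}^{i} [t^i](d·h^k) · [t^k](f·g^j) = [t^i]( d·(f ∘ h)·(g ∘ h)^j ). In other words, the matrix product of the generalized Riordan matrices R(d,h) and R(f,g) equals the generalized Riordan matrix R(d·(f ∘ h), g ∘ h), entry by entry. -/

import Mathlib

open PowerSeries

noncomputable section

/-- Formal composition (substitution) `f ∘ h` of formal power series: for `h` with zero
constant coefficient, the `n`-th coefficient of `f ∘ h` is
`Σ_{j=0}^{n} [t^j]f · [t^n](h^j)` (the terms with `j > n` vanish since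
`[t^n](h^j) = 0` for `j > n`). -/
def PowerSeries.compSubst (f h : PowerSeries ℝ) : PowerSeries ℝ :=
  PowerSeries.mk fun n =>
    ∑ j ∈ Finset.range (n + 1), PowerSeries.coeff j f * PowerSeries.coeff n (h ^ j)

open Finset

namespace PowerSeries

variable {h : PowerSeries ℝ}

lemma coeff_pow_zero (hh : constantCoeff h = 0) {n k : ℕ} (hnk : n < k) :
    coeff n (h ^ k) = 0 := by
  have : (X : ℝ⟦X⟧) ^ k ∣ h ^ k := pow_dvd_pow_of_dvd (X_dvd_iff.mpr hh) k
  exact X_pow_dvd_iff.mp this n hnk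

lemma coeff_compSubst (f : PowerSeries ℝ) (n : ℕ) :
    coeff n (f.compSubst h) =
      ∑ j ∈ Finset.range (n + 1), coeff j f * coeff n (h ^ j) := by
  simp [compSubst]

lemma coeff_compSubst_ext (f : PowerSeries ℝ) (hh : constantCoeff h = 0)
    {n N : ℕ} (hnN : n ≤ N) :
    coeff n (f.compSubst h) =
      ∑ j ∈ Finset.range (N + 1), coeff j f * coeff n (h ^ j) := by
  rw [coeff_compSubst]
  refine Finset.sum_subset (by intro x hx; simp at hx ⊢; omega) ?_
  intro x hx hx'
  simp at hx hx'
  rw [coeff_pow_zero hh (by omega), mul_zero]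

lemma compSubst_one : (1 : PowerSeries ℝ).compSubst h = 1 := by
  ext n
  rw [coeff_compSubst, Finset.sum_eq_single 0]
  · simp
  · intro b _ hb; simp [coeff_one, hb]
  · simp

lemma compSubst_mul (a b : PowerSeries ℝ) (hh : constantCoeff h = 0) :
    (a * b).compSubst h = a.compSubst h * b.compSubst h := by
  ext n
  rw [coeff_compSubst, coeff_mul]
  have hR : ∀ uv ∈ antidiagonal n,
      coeff uv.1 (a.compSubst h) * coeff uv.2 (b.compSubst h)
      = ∑ p ∈ range (n+1), ∑ q ∈ range (n+1),
          coeff p a * coeff q b * (coeff uv.1 (h ^ p) * coeff uv.2 (h ^ q)) := by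
    intro uv huv
    rw [Finset.HasAntidiagonal.mem_antidiagonal] at huv
    rw [coeff_compSubst_ext a hh (show uv.1 ≤ n by omega),
        coeff_compSubst_ext b hh (show uv.2 ≤ n by omega), Finset.sum_mul_sum]
    exact Finset.sum_congr rfl fun p _ => Finset.sum_congr rfl fun q _ => by ring
  rw [Finset.sum_congr rfl hR, Finset.sum_comm]
  have hR2 : ∀ p ∈ range (n+1),
      (∑ uv ∈ antidiagonal n, ∑ q ∈ range (n+1),
        coeff p a * coeff q b * (coeff uv.1 (h ^ p) * coeff uv.2 (h ^ q)))
      = ∑ q ∈ range (n+1), coeff p a * coeff q b * coeff n (h ^ (p + q)) := by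
    intro p _
    rw [Finset.sum_comm]
    refine Finset.sum_congr rfl fun q _ => ?_
    rw [← Finset.mul_sum, ← coeff_mul, ← pow_add]
  rw [Finset.sum_congr rfl hR2,
      Finset.sum_congr rfl (fun k (_ : k ∈ range (n+1)) => by
        rw [coeff_mul, Finset.sum_mul] :
        ∀ k ∈ range (n+1), coeff k (a*b) * coeff n (h ^ k)
          = ∑ pq ∈ antidiagonal k, coeff pq.1 a * coeff pq.2 b * coeff n (h ^ k)),
      Finset.sum_sigma', ← Finset.sum_product']
  rw [← Finset.sum_filter_add_sum_filter_not (range (n+1) ×ˢ range (n+1))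
        (fun x => x.1 + x.2 ≤ n)]
  have hz : ∑ x ∈ (range (n+1) ×ˢ range (n+1)).filter (fun x => ¬ x.1 + x.2 ≤ n),
      coeff x.1 a * coeff x.2 b * coeff n (h ^ (x.1 + x.2)) = 0 := by
    apply Finset.sum_eq_zero
    intro x hx
    simp only [Finset.mem_filter] at hx
    rw [coeff_pow_zero hh (by omega), mul_zero]
  rw [hz, add_zero]
  refine Finset.sum_nbij' (fun x => (x.2.1, x.2.2)) (fun x => ⟨x.1 + x.2, (x.1, x.2)⟩)
    ?_ ?_ ?_ ?_ ?_
  · rintro ⟨k, p, q⟩ hx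
    simp only [Finset.mem_sigma, Finset.mem_range, Finset.HasAntidiagonal.mem_antidiagonal] at hx
    simp only [Finset.mem_filter, Finset.mem_product, Finset.mem_range]
    omega
  · rintro ⟨p, q⟩ hx
    simp only [Finset.mem_filter, Finset.mem_product, Finset.mem_range] at hx
    simp only [Finset.mem_sigma, Finset.mem_range, Finset.HasAntidiagonal.mem_antidiagonal]
    exact ⟨by omega, trivial⟩
  · rintro ⟨k, p, q⟩ hx
    simp only [Finset.mem_sigma, Finset.mem_range, Finset.HasAntidiagonal.mem_antidiagonal] at hx
    simp [hx.2]
  · rintro ⟨p, q⟩ _; rfl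
  · rintro ⟨k, p, q⟩ hx
    simp only [Finset.mem_sigma, Finset.mem_range, Finset.HasAntidiagonal.mem_antidiagonal] at hx
    simp [hx.2]

lemma compSubst_pow (g : PowerSeries ℝ) (hh : constantCoeff h = 0) (j : ℕ) :
    (g ^ j).compSubst h = (g.compSubst h) ^ j := by
  induction j with
  | zero => simpa using compSubst_one
  | succ j ih => rw [pow_succ, compSubst_mul _ _ hh, ih, pow_succ]

end PowerSeries

/-- Product formula for generalized Riordan matrices:
`R(d,h) · R(f,g) = R(d·(f ∘ h), g ∘ h)`, entry by entry. -/
theorem riordan_matrix_product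
    (d f h g : PowerSeries ℝ)
    (hh : PowerSeries.constantCoeff h = 0)
    (hg : PowerSeries.constantCoeff g = 0) (i j : ℕ) :
    ∑ k ∈ Finset.range (i + 1),
        PowerSeries.coeff i (d * h ^ k) * PowerSeries.coeff k (f * g ^ j) =
      PowerSeries.coeff i (d * f.compSubst h * (g.compSubst h) ^ j) := by
  rw [← compSubst_pow g hh j, mul_assoc, ← compSubst_mul f (g ^ j) hh]
  set F := f * g ^ j with hF
  rw [coeff_mul]
  have h1 : ∀ uv ∈ antidiagonal i,
      coeff uv.1 d * coeff uv.2 (F.compSubst h)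
      = ∑ k ∈ range (i + 1), coeff k F * (coeff uv.1 d * coeff uv.2 (h ^ k)) := by
    intro uv huv
    rw [Finset.HasAntidiagonal.mem_antidiagonal] at huv
    rw [coeff_compSubst_ext F hh (show uv.2 ≤ i by omega), Finset.mul_sum]
    exact Finset.sum_congr rfl fun k _ => by ring
  rw [Finset.sum_congr rfl h1, Finset.sum_comm]
  refine Finset.sum_congr rfl fun k _ => ?_
  rw [← Finset.mul_sum, ← coeff_mul, coeff_mul]
  ring
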